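/- Let p > 2 be a real number, let u ∈ (0,1), and let a > 0 and α > 0 be real numbers. Then the inequality (1+u)^{p−1}·(1−u^{p−1}) / (a + α·(1+u)^p/(1+u^p))^{1−1/p} > (1−u)^{p−1}·(1+u^{p−1}) / (a + α·(1−u)^p/(1+u^p))^{1−1/p} holds if and only if a > α·f(u). -/
import Mathlib


/-- The function f from Lemma 1 of the paper. -/
noncomputable def f (p u : ℝ) : ℝ :=
  (1 - u ^ (2:ℝ)) ^ p / (1 + u ^ p) *
    ((1 + u ^ (p - 1)) ^ (p / (p - 1)) - (1 - u ^ (p - 1)) ^ (p / (p - 1))) /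
    ((1 + u) ^ p * (1 - u ^ (p - 1)) ^ (p / (p - 1)) -
      (1 - u) ^ p * (1 + u ^ (p - 1)) ^ (p / (p - 1)))

private lemma rpow_lt_rpow_iff_aux {q z w : ℝ} (hq : 0 < q) (hz : 0 ≤ z) (hw : 0 ≤ w) :
    z ^ q < w ^ q ↔ z < w := by
  constructor
  · intro h
    by_contra hc
    push_neg at hc
    exact absurd (Real.rpow_le_rpow hw hc hq.le) (not_le.mpr h)
  · intro h
    exact Real.rpow_lt_rpow hz h hq

theorem stmt_12 (p : ℝ) (hp : 2 < p) (u : ℝ) (hu : u ∈ Set.Ioo (0:ℝ) 1)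
    (a α : ℝ) (ha : 0 < a) (hα : 0 < α) :
    (1 + u) ^ (p - 1) * (1 - u ^ (p - 1)) / (a + α * (1 + u) ^ p / (1 + u ^ p)) ^ (1 - 1 / p) >
        (1 - u) ^ (p - 1) * (1 + u ^ (p - 1)) / (a + α * (1 - u) ^ p / (1 + u ^ p)) ^ (1 - 1 / p)
      ↔ a > α * f p u := by
  obtain ⟨hu0, hu1⟩ := hu
  have hv : (0:ℝ) < 1 + u := by linarith
  have hw : (0:ℝ) < 1 - u := by linarith
  have hp1 : (0:ℝ) < p - 1 := by linarith
  have hp0 : (0:ℝ) < p := by linarith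
  have hq0 : 0 < p / (p - 1) := div_pos hp0 hp1
  have hm0 : 0 < u ^ (p - 1) := Real.rpow_pos_of_pos hu0 _
  have hmu : u ^ (p - 1) < u := by
    have h := Real.rpow_lt_rpow_of_exponent_gt hu0 hu1 (show (1:ℝ) < p - 1 by linarith)
    rwa [Real.rpow_one] at h
  have hm1 : u ^ (p - 1) < 1 := hmu.trans hu1
  have hup : 0 < u ^ p := Real.rpow_pos_of_pos hu0 _
  have hD : (0:ℝ) < 1 + u ^ p := by linarith
  have hX : 0 < a + α * (1 + u) ^ p / (1 + u ^ p) := by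
    have : 0 < α * (1 + u) ^ p / (1 + u ^ p) :=
      div_pos (mul_pos hα (Real.rpow_pos_of_pos hv _)) hD
    linarith
  have hY : 0 < a + α * (1 - u) ^ p / (1 + u ^ p) := by
    have : 0 < α * (1 - u) ^ p / (1 + u ^ p) :=
      div_pos (mul_pos hα (Real.rpow_pos_of_pos hw _)) hD
    linarith
  have hXe : 0 < (a + α * (1 + u) ^ p / (1 + u ^ p)) ^ (1 - 1 / p) := Real.rpow_pos_of_pos hX _
  have hYe : 0 < (a + α * (1 - u) ^ p / (1 + u ^ p)) ^ (1 - 1 / p) := Real.rpow_pos_of_pos hY _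
  have hq1 : (p - 1) * (p / (p - 1)) = p := by field_simp
  have he1 : (1 - 1 / p) * (p / (p - 1)) = 1 := by field_simp
  -- A > B
  have hAB : (1 - u) ^ (p - 1) * (1 + u ^ (p - 1)) <
      (1 + u) ^ (p - 1) * (1 - u ^ (p - 1)) := by
    have hr1 : 1 < (1 + u) / (1 - u) := (one_lt_div hw).2 (by linarith)
    have ha1 : (1 + u ^ (p - 1)) / (1 - u ^ (p - 1)) < (1 + u) / (1 - u) := by
      rw [div_lt_div_iff₀ (by linarith) hw]
      nlinarith
    have ha2 : (1 + u) / (1 - u) < ((1 + u) / (1 - u)) ^ (p - 1) := by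
      nth_rewrite 1 [← Real.rpow_one ((1 + u) / (1 - u))]
      exact Real.rpow_lt_rpow_of_exponent_lt hr1 (by linarith)
    have h2 : (1 + u ^ (p - 1)) / (1 - u ^ (p - 1)) < ((1 + u) / (1 - u)) ^ (p - 1) := by
      linarith
    rw [Real.div_rpow hv.le hw.le, div_lt_div_iff₀ (by linarith) (Real.rpow_pos_of_pos hw _)] at h2
    linarith [h2]
  have hBq : ((1 - u) ^ (p - 1) * (1 + u ^ (p - 1))) ^ (p / (p - 1)) =
      (1 - u) ^ p * (1 + u ^ (p - 1)) ^ (p / (p - 1)) := by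
    rw [Real.mul_rpow (Real.rpow_nonneg hw.le _) (by linarith), ← Real.rpow_mul hw.le, hq1]
  have hAq : ((1 + u) ^ (p - 1) * (1 - u ^ (p - 1))) ^ (p / (p - 1)) =
      (1 + u) ^ p * (1 - u ^ (p - 1)) ^ (p / (p - 1)) := by
    rw [Real.mul_rpow (Real.rpow_nonneg hv.le _) (by linarith), ← Real.rpow_mul hv.le, hq1]
  have hST : (1 - u) ^ p * (1 + u ^ (p - 1)) ^ (p / (p - 1)) <
      (1 + u) ^ p * (1 - u ^ (p - 1)) ^ (p / (p - 1)) := by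
    rw [← hBq, ← hAq]
    exact Real.rpow_lt_rpow (mul_nonneg (Real.rpow_nonneg hw.le _) (by linarith)) hAB hq0
  have hSTpos : 0 < (1 + u) ^ p * (1 - u ^ (p - 1)) ^ (p / (p - 1)) -
      (1 - u) ^ p * (1 + u ^ (p - 1)) ^ (p / (p - 1)) := sub_pos.2 hST
  have hBXq : ((1 - u) ^ (p - 1) * (1 + u ^ (p - 1)) *
        (a + α * (1 + u) ^ p / (1 + u ^ p)) ^ (1 - 1 / p)) ^ (p / (p - 1)) =
      (1 - u) ^ p * (1 + u ^ (p - 1)) ^ (p / (p - 1)) *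
        (a + α * (1 + u) ^ p / (1 + u ^ p)) := by
    rw [Real.mul_rpow (mul_nonneg (Real.rpow_nonneg hw.le _) (by linarith)) hXe.le, hBq,
      ← Real.rpow_mul hX.le, he1, Real.rpow_one]
  have hAYq : ((1 + u) ^ (p - 1) * (1 - u ^ (p - 1)) *
        (a + α * (1 - u) ^ p / (1 + u ^ p)) ^ (1 - 1 / p)) ^ (p / (p - 1)) =
      (1 + u) ^ p * (1 - u ^ (p - 1)) ^ (p / (p - 1)) *
        (a + α * (1 - u) ^ p / (1 + u ^ p)) := by
    rw [Real.mul_rpow (mul_nonneg (Real.rpow_nonneg hv.le _) (by linarith)) hYe.le, hAq,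
      ← Real.rpow_mul hY.le, he1, Real.rpow_one]
  have hfeq : f p u = (1 - u ^ (2:ℝ)) ^ p / (1 + u ^ p) *
      ((1 + u ^ (p - 1)) ^ (p / (p - 1)) - (1 - u ^ (p - 1)) ^ (p / (p - 1))) /
      ((1 + u) ^ p * (1 - u ^ (p - 1)) ^ (p / (p - 1)) -
        (1 - u) ^ p * (1 + u ^ (p - 1)) ^ (p / (p - 1))) := rfl
  have hK : (1 - u ^ (2:ℝ)) ^ p = (1 + u) ^ p * (1 - u) ^ p := by
    have h2 : (1:ℝ) - u ^ (2:ℝ) = (1 + u) * (1 - u) := by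
      rw [show (2:ℝ) = ((2:ℕ):ℝ) by norm_num, Real.rpow_natCast]
      ring
    rw [h2, Real.mul_rpow hv.le hw.le]
  have keyeq : (1 + u) ^ p * (1 - u ^ (p - 1)) ^ (p / (p - 1)) *
        (a + α * (1 - u) ^ p / (1 + u ^ p)) -
      (1 - u) ^ p * (1 + u ^ (p - 1)) ^ (p / (p - 1)) *
        (a + α * (1 + u) ^ p / (1 + u ^ p)) =
      a * ((1 + u) ^ p * (1 - u ^ (p - 1)) ^ (p / (p - 1)) -
          (1 - u) ^ p * (1 + u ^ (p - 1)) ^ (p / (p - 1))) -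
        α * ((1 - u ^ (2:ℝ)) ^ p / (1 + u ^ p) *
          ((1 + u ^ (p - 1)) ^ (p / (p - 1)) - (1 - u ^ (p - 1)) ^ (p / (p - 1)))) := by
    rw [hK]
    field_simp
    ring
  rw [gt_iff_lt, gt_iff_lt, div_lt_div_iff₀ hYe hXe, hfeq, ← mul_div_assoc,
    div_lt_iff₀ hSTpos]
  constructor
  · intro h
    have h2 := Real.rpow_lt_rpow
      (mul_nonneg (mul_nonneg (Real.rpow_nonneg hw.le _) (by linarith)) hXe.le) h hq0
    rw [hBXq, hAYq] at h2
    linarith [keyeq]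
  · intro h
    have h2 : (1 - u) ^ p * (1 + u ^ (p - 1)) ^ (p / (p - 1)) *
          (a + α * (1 + u) ^ p / (1 + u ^ p)) <
        (1 + u) ^ p * (1 - u ^ (p - 1)) ^ (p / (p - 1)) *
          (a + α * (1 - u) ^ p / (1 + u ^ p)) := by
      linarith [keyeq]
    rw [← hBXq, ← hAYq] at h2
    exact (rpow_lt_rpow_iff_aux hq0
      (mul_nonneg (mul_nonneg (Real.rpow_nonneg hw.le _) (by linarith)) hXe.le)
      (mul_nonneg (mul_nonneg (Real.rpow_nonneg hv.le _) (by linarith)) hYe.le)).mp h2
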